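/- arXiv:1203.2003 — 16 statements merged into one kernel-verified Lean document; each statement's English description precedes it below -/
import Mathlib

section
/- Let F be a filter on ℕ with F ≤ Filter.cofinite and F.NeBot (representing a nontrivial admissible ideal I on ℕ). If a real sequence x : ℕ → ℝ is I-convergent to ℓ (Tendsto x F (𝓝 ℓ)), then there exists a strictly monotone map φ : ℕ → ℕ such that the subsequence x ∘ φ converges to ℓ in the ordinary sense (Tendsto (x ∘ φ) atTop (𝓝 ℓ)). (The sequential method I is subsequential.) -/
open Filter Topology

theorem ideal_method_subsequential (F : Filter ℕ) (hF : F ≤ Filter.cofinite) [F.NeBot]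
    (x : ℕ → ℝ) (ℓ : ℝ) (h : Tendsto x F (𝓝 ℓ)) :
    ∃ φ : ℕ → ℕ, StrictMono φ ∧ Tendsto (x ∘ φ) atTop (𝓝 ℓ) := by
  have hfreq : ∀ n : ℕ, ∃ᶠ k in atTop, dist (x k) ℓ < 1 / (n + 1) := by
    intro n
    have hpos : (0 : ℝ) < 1 / (n + 1) := by positivity
    have hS : {k | dist (x k) ℓ < 1 / (n + 1)} ∈ F :=
      h (Metric.ball_mem_nhds ℓ hpos)
    have hinf : {k | dist (x k) ℓ < 1 / (n + 1)}.Infinite := by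
      intro hfin
      have : {k | dist (x k) ℓ < 1 / (n + 1)}ᶜ ∈ F := hF hfin.compl_mem_cofinite
      have : (∅ : Set ℕ) ∈ F := by
        have := Filter.inter_mem hS this
        simpa using this
      exact (Filter.empty_notMem F) this
    exact Nat.frequently_atTop_iff_infinite.mpr hinf
  obtain ⟨φ, hmono, hφ⟩ := Filter.extraction_forall_of_frequently hfreq
  refine ⟨φ, hmono, ?_⟩
  rw [Metric.tendsto_atTop]
  intro ε hε
  obtain ⟨N, hN⟩ := exists_nat_one_div_lt hε
  refine ⟨N, fun n hn => ?_⟩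
  calc dist ((x ∘ φ) n) ℓ < 1 / (n + 1) := hφ n
    _ ≤ 1 / (N + 1) := by
        apply one_div_le_one_div_of_le (by positivity)
        exact_mod_cast Nat.succ_le_succ hn
    _ < ε := hN
end

section
/- Let F be a filter on ℕ with F ≤ Filter.cofinite and F.NeBot (representing a nontrivial admissible ideal I on ℕ). A subset E of ℝ is sequentially compact (every sequence of points of E has a subsequence converging in the ordinary sense to a point of E) if and only if E is I-sequentially compact (every sequence of points of E has a subsequence that is I-convergent to a point of E). -/
open Filter Topology

theorem seq_compact_iff_ideal_seq_compact (F : Filter ℕ) (hF : F ≤ Filter.cofinite)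
    [F.NeBot] (E : Set ℝ) :
    (∀ x : ℕ → ℝ, (∀ n, x n ∈ E) →
      ∃ φ : ℕ → ℕ, StrictMono φ ∧ ∃ ℓ ∈ E, Tendsto (x ∘ φ) atTop (𝓝 ℓ)) ↔
    (∀ x : ℕ → ℝ, (∀ n, x n ∈ E) →
      ∃ φ : ℕ → ℕ, StrictMono φ ∧ ∃ ℓ ∈ E, Tendsto (x ∘ φ) F (𝓝 ℓ)) := by
  have hFa : F ≤ atTop := by rwa [← Nat.cofinite_eq_atTop]
  constructor
  · intro h x hx
    obtain ⟨φ, hφ, ℓ, hℓE, hconv⟩ := h x hx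
    exact ⟨φ, hφ, ℓ, hℓE, hconv.mono_left hFa⟩
  · intro h x hx
    obtain ⟨φ, hφ, ℓ, hℓE, hconv⟩ := h x hx
    have hcp : MapClusterPt ℓ atTop (x ∘ φ) := by
      refine MapClusterPt.mono ?_ hFa
      exact hconv.mapClusterPt
    obtain ⟨ψ, hψ, hconv'⟩ := TopologicalSpace.FirstCountableTopology.tendsto_subseq hcp
    exact ⟨φ ∘ ψ, hφ.comp hψ, ℓ, hℓE, hconv'⟩
end

section
/- Let F be a filter on ℕ with F ≤ Filter.cofinite and F.NeBot (representing a nontrivial admissible ideal I on ℕ), let E ⊆ ℝ, f : ℝ → ℝ, and x₀ ∈ E. If f is I-sequentially continuous at x₀ (for every sequence x : ℕ → ℝ of points of E, Tendsto x F (𝓝 x₀) implies Tendsto (f ∘ x) F (𝓝 (f x₀))), then f is continuous at x₀ within E in the ordinary sense (ContinuousWithinAt f E x₀). -/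
open Filter Topology

theorem ideal_seq_continuous_implies_continuous (F : Filter ℕ) (hF : F ≤ Filter.cofinite)
    [F.NeBot] (E : Set ℝ) (f : ℝ → ℝ) (x₀ : ℝ) (hx₀ : x₀ ∈ E)
    (h : ∀ x : ℕ → ℝ, (∀ n, x n ∈ E) → Tendsto x F (𝓝 x₀) →
      Tendsto (f ∘ x) F (𝓝 (f x₀))) :
    ContinuousWithinAt f E x₀ := by
  by_contra hc
  rw [Metric.continuousWithinAt_iff] at hc
  push_neg at hc
  obtain ⟨ε, hε, hc⟩ := hc
  have hchoice : ∀ n : ℕ, ∃ y, y ∈ E ∧ dist y x₀ < 1 / (n + 1) ∧ ε ≤ dist (f y) (f x₀) := by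
    intro n
    obtain ⟨y, hyE, hyd, hyf⟩ := hc (1 / (n + 1)) (by positivity)
    exact ⟨y, hyE, hyd, hyf⟩
  choose x hxE hxd hxf using hchoice
  have hx : Tendsto x atTop (𝓝 x₀) := by
    rw [tendsto_iff_dist_tendsto_zero]
    exact squeeze_zero (fun n => dist_nonneg) (fun n => (hxd n).le)
      tendsto_one_div_add_atTop_nhds_zero_nat
  have hxF : Tendsto x F (𝓝 x₀) := hx.mono_left (by rwa [← Nat.cofinite_eq_atTop])
  have hfx := h x hxE hxF
  have : ∀ᶠ n in F, dist (f (x n)) (f x₀) < ε :=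
    hfx (Metric.ball_mem_nhds _ hε)
  have : ∀ᶠ _ in F, False := this.mono fun n hn => absurd (hxf n) (not_le.mpr hn)
  exact Filter.NeBot.ne ‹F.NeBot› (Filter.eventually_false_iff_eq_bot.mp this)
end

section
/- Let F be a filter on ℕ with F ≤ Filter.cofinite and F.NeBot (representing a nontrivial admissible ideal I on ℕ), let E ⊆ ℝ and f : ℝ → ℝ. If f is ward continuous on E (for every sequence x : ℕ → ℝ of points of E, if Tendsto (fun n => x (n+1) − x n) atTop (𝓝 0) then Tendsto (fun n => f (x (n+1)) − f (x n)) atTop (𝓝 0)), then f is I-sequentially continuous on E: for every x₀ ∈ E and every sequence x of points of E with Tendsto x F (𝓝 x₀), one has Tendsto (f ∘ x) F (𝓝 (f x₀)). -/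
open Filter Topology

theorem ward_continuous_implies_ideal_seq_continuous (F : Filter ℕ)
    (hF : F ≤ Filter.cofinite) [F.NeBot] (E : Set ℝ) (f : ℝ → ℝ)
    (h : ∀ x : ℕ → ℝ, (∀ n, x n ∈ E) →
      Tendsto (fun n => x (n + 1) - x n) atTop (𝓝 0) →
      Tendsto (fun n => f (x (n + 1)) - f (x n)) atTop (𝓝 0)) :
    ∀ x₀ ∈ E, ∀ x : ℕ → ℝ, (∀ n, x n ∈ E) → Tendsto x F (𝓝 x₀) →
      Tendsto (f ∘ x) F (𝓝 (f x₀)) := by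
  intro x₀ hx₀ x hxE hx
  -- Step 1: ordinary sequential continuity on E at x₀
  have seqcont : ∀ v : ℕ → ℝ, (∀ n, v n ∈ E) → Tendsto v atTop (𝓝 x₀) →
      Tendsto (fun n => f (v n)) atTop (𝓝 (f x₀)) := by
    intro v hvE hv
    classical
    set z : ℕ → ℝ := fun n => if Even n then x₀ else v (n / 2) with hz
    have hzE : ∀ n, z n ∈ E := by
      intro n; by_cases hn : Even n <;> simp [hz, hn, hx₀, hvE]
    have hdiv : Tendsto (fun n : ℕ => n / 2) atTop atTop := by
      apply tendsto_atTop_atTop.2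
      intro b
      exact ⟨2 * b, fun n hn => Nat.le_div_iff_mul_le (by norm_num) |>.2 (by omega)⟩
    have hw : Tendsto (fun n : ℕ => v (n / 2) - x₀) atTop (𝓝 0) := by
      have := (hv.comp hdiv).sub_const x₀
      simpa using this
    have hqc : Tendsto (fun n => z (n + 1) - z n) atTop (𝓝 0) := by
      apply squeeze_zero_norm (a := fun n => ‖v (n / 2) - x₀‖)
      · intro n
        by_cases hn : Even n
        · have h1 : ¬ Even (n + 1) := by simp [Nat.even_add_one, hn]
          have h2 : (n + 1) / 2 = n / 2 := by obtain ⟨k, rfl⟩ := hn; omega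
          simp [hz, hn, h1, h2]
        · have h1 : Even (n + 1) := by simp [Nat.even_add_one, hn]
          simp [hz, hn, h1, norm_sub_rev]
      · simpa using hw.norm
    have hfqc := h z hzE hqc
    have hsub : Tendsto (fun k => f (z (2 * k + 1)) - f (z (2 * k))) atTop (𝓝 0) := by
      have h2k : Tendsto (fun k : ℕ => 2 * k) atTop atTop :=
        tendsto_atTop_atTop.2 fun b => ⟨b, fun n hn => by omega⟩
      exact hfqc.comp h2k
    have heq : ∀ k, f (z (2 * k + 1)) - f (z (2 * k)) = f (v k) - f x₀ := by
      intro k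
      have h1 : ¬ Even (2 * k + 1) := by simp [Nat.even_add_one]
      have h2 : Even (2 * k) := even_two_mul k
      have h3 : (2 * k + 1) / 2 = k := by omega
      simp [hz, h1, h2, h3]
    have : Tendsto (fun k => f (v k) - f x₀) atTop (𝓝 0) := by
      simpa [heq] using hsub
    have := this.add_const (f x₀)
    simpa using this
  -- Step 2: continuity within E at x₀
  have hcont : Tendsto f (𝓝[E] x₀) (𝓝 (f x₀)) := by
    rw [tendsto_iff_seq_tendsto]
    intro u hu
    classical
    rw [tendsto_nhdsWithin_iff] at hu
    obtain ⟨hu1, hu2⟩ := hu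
    set v : ℕ → ℝ := fun n => if u n ∈ E then u n else x₀ with hvdef
    have hvE : ∀ n, v n ∈ E := by
      intro n; by_cases hn : u n ∈ E <;> simp [hvdef, hn, hx₀]
    have hveq : ∀ᶠ n in atTop, v n = u n := by
      filter_upwards [hu2] with n hn
      simp [hvdef, hn]
    have hv : Tendsto v atTop (𝓝 x₀) := hu1.congr' (hveq.mono fun n hn => hn.symm)
    have := seqcont v hvE hv
    exact this.congr' (by filter_upwards [hveq] with n hn; simp [Function.comp, hn])
  -- Step 3: compose
  have hxW : Tendsto x F (𝓝[E] x₀) :=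
    tendsto_nhdsWithin_iff.2 ⟨hx, Eventually.of_forall hxE⟩
  exact hcont.comp hxW
end

section
/- Let F be a filter on ℕ with F ≤ Filter.cofinite and F.NeBot (representing a nontrivial admissible ideal I on ℕ), let E ⊆ ℝ and f : ℝ → ℝ. If f is slowly oscillating continuous on E (for every sequence x : ℕ → ℝ of points of E that is slowly oscillating, the sequence f ∘ x is slowly oscillating), then f is I-sequentially continuous on E: for every x₀ ∈ E and every sequence x of points of E with Tendsto x F (𝓝 x₀), one has Tendsto (f ∘ x) F (𝓝 (f x₀)). -/
open Filter Topology

def SlowlyOscillating (x : ℕ → ℝ) : Prop :=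
  ∀ ε > (0 : ℝ), ∃ δ > (0 : ℝ), ∃ N : ℕ, ∀ n m : ℕ,
    N ≤ n → n ≤ m → (m : ℝ) ≤ (1 + δ) * n → |x m - x n| < ε

lemma so_cont (E : Set ℝ) (f : ℝ → ℝ)
    (h : ∀ x : ℕ → ℝ, (∀ n, x n ∈ E) → SlowlyOscillating x →
      SlowlyOscillating (f ∘ x))
    {x₀ : ℝ} (hx₀ : x₀ ∈ E) {ε : ℝ} (hε : 0 < ε) :
    ∃ δ > (0:ℝ), ∀ y ∈ E, |y - x₀| < δ → |f y - f x₀| < ε := by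
  by_contra hc
  push_neg at hc
  choose y hyE hyd hyf using fun j : ℕ => hc (1/(j+1)) (by positivity)
  set s : ℕ → ℝ := fun n => if Even n then x₀ else y (n/2) with hs
  have hsE : ∀ n, s n ∈ E := by
    intro n; by_cases hn : Even n <;> simp [hs, hn, hx₀, hyE]
  have hbound : ∀ n : ℕ, |s n - x₀| < 2/(n+1) := by
    intro n
    by_cases hn : Even n
    · simp only [hs, hn, if_pos]
      simp only [sub_self, abs_zero]
      positivity
    · have h1 := hyd (n/2)
      have hdiv : n ≤ 2*(n/2) + 1 := by omega
      have hdivR : (n:ℝ) ≤ 2*(n/2 : ℕ) + 1 := by exact_mod_cast hdiv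
      have h2 : (1:ℝ)/((n/2 : ℕ)+1) ≤ 2/(n+1) := by
        rw [div_le_div_iff₀ (by positivity) (by positivity)]
        nlinarith
      simp only [hs, hn, if_neg, not_false_iff]
      calc |y (n/2) - x₀| < 1/((n/2 : ℕ)+1) := h1
        _ ≤ 2/(n+1) := h2
  have hso : SlowlyOscillating s := by
    intro ε' hε'
    refine ⟨1, one_pos, ⌈4/ε'⌉₊ + 1, fun n m hNn hnm _ => ?_⟩
    have hn1 : (4:ℝ)/ε' < n + 1 := by
      have h1 : (4:ℝ)/ε' ≤ ⌈4/ε'⌉₊ := Nat.le_ceil _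
      have h2 : (⌈4/ε'⌉₊ : ℝ) + 1 ≤ (n:ℝ) + 1 := by
        have : (⌈4/ε'⌉₊ : ℝ) ≤ n := by exact_mod_cast le_trans (Nat.le_succ _) hNn
        linarith
      linarith
    have hm := hbound m
    have hn := hbound n
    have h4 : (2:ℝ)/(m+1) ≤ 2/(n+1) := by
      apply div_le_div_of_nonneg_left (by norm_num) (by positivity)
      exact_mod_cast by linarith [(Nat.cast_le (α := ℝ)).2 hnm]
    have h5 : (4:ℝ)/(n+1) < ε' := by
      rw [div_lt_iff₀ (by positivity)]
      have hn1' : (0:ℝ) < n + 1 := by positivity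
      calc (4:ℝ) = (4/ε') * ε' := by field_simp
        _ < (n+1) * ε' := mul_lt_mul_of_pos_right hn1 hε'
        _ = ε' * (n+1) := by ring
    calc |s m - s n| ≤ |s m - x₀| + |s n - x₀| := by
          have : s m - s n = (s m - x₀) - (s n - x₀) := by ring
          rw [this]; exact abs_sub _ _
      _ < 2/(m+1) + 2/(n+1) := by linarith
      _ ≤ 2/(n+1) + 2/(n+1) := by linarith
      _ = 4/(n+1) := by ring
      _ < ε' := h5
  obtain ⟨δ, hδ, N, hN⟩ := h s hsE hso ε hε
  set k := max N (⌈1/δ⌉₊ + 1) with hk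
  have hkδ : (1:ℝ) ≤ δ * (2*k) := by
    have h1 : (1:ℝ)/δ ≤ ⌈1/δ⌉₊ := Nat.le_ceil _
    have h2 : (⌈1/δ⌉₊ : ℝ) ≤ k := by
      exact_mod_cast le_trans (Nat.le_succ _) (le_max_right _ _)
    have h3 : (1:ℝ)/δ ≤ 2*k := by
      have : (k:ℝ) ≤ 2*k := by
        have := (Nat.cast_nonneg (α := ℝ) k); linarith
      linarith
    calc (1:ℝ) = δ * (1/δ) := by field_simp
      _ ≤ δ * (2*k) := by
        apply mul_le_mul_of_nonneg_left h3 hδ.le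
  have hNk : N ≤ 2*k := by
    have := le_max_left N (⌈1/δ⌉₊ + 1); omega
  have key := hN (2*k) (2*k+1) hNk
    (by omega) (by push_cast; nlinarith)
  have hsn : s (2*k) = x₀ := by simp [hs, even_two_mul k]
  have hsm : s (2*k+1) = y k := by
    have hodd : ¬ Even (2*k+1) := by simp [Nat.even_add_one, even_two_mul k]
    have : (2*k+1)/2 = k := by omega
    simp [hs, hodd, this]
  rw [Function.comp_apply, Function.comp_apply, hsn, hsm] at key
  exact absurd key (not_lt.2 (hyf k))

theorem slowly_oscillating_continuous_implies_ideal_seq_continuous (F : Filter ℕ)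
    (hF : F ≤ Filter.cofinite) [F.NeBot] (E : Set ℝ) (f : ℝ → ℝ)
    (h : ∀ x : ℕ → ℝ, (∀ n, x n ∈ E) → SlowlyOscillating x →
      SlowlyOscillating (f ∘ x)) :
    ∀ x₀ ∈ E, ∀ x : ℕ → ℝ, (∀ n, x n ∈ E) → Tendsto x F (𝓝 x₀) →
      Tendsto (f ∘ x) F (𝓝 (f x₀)) := by
  intro x₀ hx₀ x hxE hx
  rw [Metric.tendsto_nhds] at hx ⊢
  intro ε hε
  obtain ⟨δ, hδ, hcont⟩ := so_cont E f h hx₀ hε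
  filter_upwards [hx δ hδ] with n hn
  rw [Function.comp_apply, Real.dist_eq]
  exact hcont (x n) (hxE n) (by rwa [Real.dist_eq] at hn)
end

section
/- Let F be a filter on ℕ with F ≤ Filter.cofinite and F.NeBot (representing a nontrivial admissible ideal I on ℕ), let E ⊆ ℝ and f : ℝ → ℝ. If f is δ-ward continuous on E (for every sequence x : ℕ → ℝ of points of E that is δ-quasi-Cauchy, the sequence f ∘ x is δ-quasi-Cauchy), then f is I-sequentially continuous on E: for every x₀ ∈ E and every sequence x of points of E with Tendsto x F (𝓝 x₀), one has Tendsto (f ∘ x) F (𝓝 (f x₀)). -/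
open Filter Topology

theorem delta_ward_continuous_implies_ideal_seq_continuous (F : Filter ℕ)
    (hF : F ≤ Filter.cofinite) [F.NeBot] (E : Set ℝ) (f : ℝ → ℝ)
    (h : ∀ x : ℕ → ℝ, (∀ n, x n ∈ E) →
      Tendsto (fun n => (x (n + 2) - x (n + 1)) - (x (n + 1) - x n)) atTop (𝓝 0) →
      Tendsto (fun n => (f (x (n + 2)) - f (x (n + 1))) - (f (x (n + 1)) - f (x n)))
        atTop (𝓝 0)) :
    ∀ x₀ ∈ E, ∀ x : ℕ → ℝ, (∀ n, x n ∈ E) → Tendsto x F (𝓝 x₀) →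
      Tendsto (f ∘ x) F (𝓝 (f x₀)) := by
  intro x₀ hx₀ x hxE hx
  -- Step 1: f is ε-δ continuous at x₀ relative to E
  have cont : ∀ ε > (0:ℝ), ∃ δ > (0:ℝ), ∀ y ∈ E, |y - x₀| < δ → |f y - f x₀| < ε := by
    by_contra hc
    push_neg at hc
    obtain ⟨ε, hε, hεc⟩ := hc
    have hsel : ∀ k : ℕ, ∃ y, y ∈ E ∧ |y - x₀| < 1/(k+1) ∧ ε ≤ |f y - f x₀| := by
      intro k
      obtain ⟨y, hyE, hy1, hy2⟩ := hεc (1/(k+1)) (by positivity)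
      exact ⟨y, hyE, hy1, hy2⟩
    choose y hyE hy1 hy2 using hsel
    set z : ℕ → ℝ := fun n => if n % 2 = 0 then y (n / 2) else x₀ with hzdef
    have hzE : ∀ n, z n ∈ E := by
      intro n; simp only [hzdef]; split
      · exact hyE _
      · exact hx₀
    have hz : Tendsto z atTop (𝓝 x₀) := by
      rw [Metric.tendsto_atTop]
      intro e he
      obtain ⟨N, hN⟩ := exists_nat_gt (1/e)
      refine ⟨2*N, fun n hn => ?_⟩
      simp only [hzdef, Real.dist_eq]
      split
      · refine lt_of_lt_of_le (hy1 (n/2)) ?_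
        have h1 : (N:ℝ) + 1 ≤ (n/2 : ℕ) + 1 := by
          have : N ≤ n/2 := by omega
          exact_mod_cast by omega
        rw [div_le_iff₀ (by positivity)]
        rw [div_lt_iff₀ (by positivity)] at hN
        nlinarith [h1, hN, he]
      · simpa using he
    have hzd : Tendsto (fun n => (z (n+2) - z (n+1)) - (z (n+1) - z n)) atTop (𝓝 0) := by
      have h2 := hz.comp (tendsto_add_atTop_nat 2)
      have h1 := hz.comp (tendsto_add_atTop_nat 1)
      have := (h2.sub h1).sub (h1.sub hz)
      simpa using this
    have hfz := h z hzE hzd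
    have hodd : Tendsto (fun k : ℕ => 2*k+1) atTop atTop :=
      tendsto_atTop_atTop.mpr fun b => ⟨b, fun a ha => by omega⟩
    have h2 := hfz.comp hodd
    have hsimp : ∀ k : ℕ, ((fun n => (f (z (n + 2)) - f (z (n + 1))) - (f (z (n + 1)) - f (z n)))
        ∘ (fun k : ℕ => 2*k+1)) k = 2 * (f x₀ - f (y (k+1))) := by
      intro k
      have e1 : (2*k+1) % 2 = 1 := by omega
      have e2 : (2*k+1+1) % 2 = 0 := by omega
      have e3 : (2*k+1+2) % 2 = 1 := by omega
      have e4 : (2*k+1+1) / 2 = k+1 := by omega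
      simp only [Function.comp, hzdef, e1, e2, e3, e4]
      norm_num
      ring
    rw [show ((fun n => (f (z (n + 2)) - f (z (n + 1))) - (f (z (n + 1)) - f (z n)))
        ∘ (fun k : ℕ => 2*k+1)) = fun k => 2 * (f x₀ - f (y (k+1))) from funext hsimp] at h2
    have h3 : Tendsto (fun k => f (y (k+1))) atTop (𝓝 (f x₀)) := by
      have := h2.const_mul (1/2 : ℝ)
      simp only [mul_zero] at this
      have h4 : Tendsto (fun k => f x₀ - f (y (k+1))) atTop (𝓝 0) := by
        convert this using 2 with k
        ring
      have := (tendsto_const_nhds (x := f x₀) (f := atTop)).sub h4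
      simpa using this
    have := (h3.sub (tendsto_const_nhds (x := f x₀))).abs
    rw [sub_self, abs_zero] at this
    have hev := this.eventually (eventually_lt_nhds hε)
    obtain ⟨k, hk⟩ := hev.exists
    exact absurd (hy2 (k+1)) (not_le.mpr hk)
  -- Step 2: conclude
  rw [Metric.tendsto_nhds]
  intro ε hε
  obtain ⟨δ, hδ, hδc⟩ := cont ε hε
  have hmem : {n | x n ∈ Metric.ball x₀ δ} ∈ F := hx (Metric.ball_mem_nhds x₀ hδ)
  filter_upwards [hmem] with n hn
  simp only [Function.comp, Real.dist_eq]
  exact hδc (x n) (hxE n) (by simpa [Real.dist_eq] using hn)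
end

section
/- Let F be a filter on ℕ with F ≤ Filter.cofinite and F.NeBot (representing a nontrivial admissible ideal I on ℕ), let E ⊆ ℝ and f : ℝ → ℝ. If f is quasi-slowly oscillating continuous on E (for every sequence x : ℕ → ℝ of points of E such that the difference sequence (fun n => x (n+1) − x n) is slowly oscillating, the sequence (fun n => f (x (n+1)) − f (x n)) is slowly oscillating), then f is I-sequentially continuous on E: for every x₀ ∈ E and every sequence x of points of E with Tendsto x F (𝓝 x₀), one has Tendsto (f ∘ x) F (𝓝 (f x₀)). -/
open Filter Topology

lemma null_slowlyOscillating {d : ℕ → ℝ} (hd : Tendsto d atTop (𝓝 0)) :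
    SlowlyOscillating d := by
  intro ε hε
  refine ⟨1, one_pos, ?_⟩
  obtain ⟨N, hN⟩ := (Metric.tendsto_atTop.1 hd) (ε / 2) (by linarith)
  refine ⟨N, fun n m hn hnm _ => ?_⟩
  have h1 := hN n hn
  have h2 := hN m (hn.trans hnm)
  simp only [Real.dist_eq, sub_zero] at h1 h2
  calc |d m - d n| ≤ |d m| + |d n| := abs_sub _ _
    _ < ε := by linarith

lemma key_seq_cont (E : Set ℝ) (f : ℝ → ℝ)
    (h : ∀ x : ℕ → ℝ, (∀ n, x n ∈ E) →
      SlowlyOscillating (fun n => x (n + 1) - x n) →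
      SlowlyOscillating (fun n => f (x (n + 1)) - f (x n)))
    {x₀ : ℝ} (hx₀ : x₀ ∈ E) {x : ℕ → ℝ} (hxE : ∀ n, x n ∈ E)
    (hx : Tendsto x atTop (𝓝 x₀)) :
    Tendsto (fun n => f (x n)) atTop (𝓝 (f x₀)) := by
  set y : ℕ → ℝ := fun n => if Even n then x₀ else x (n / 2) with hy
  have hyE : ∀ n, y n ∈ E := by
    intro n
    by_cases hn : Even n <;> simp [hy, hn, hx₀, hxE]
  have y_even : ∀ k, y (2 * k) = x₀ := by
    intro k; simp [hy]
  have y_odd : ∀ k, y (2 * k + 1) = x k := by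
    intro k
    have h1 : ¬ Even (2 * k + 1) := by simp [Nat.even_add_one]
    have h2 : (2 * k + 1) / 2 = k := by omega
    simp [hy, h1, h2]
  have hdiv : Tendsto (fun n : ℕ => n / 2) atTop atTop := by
    apply tendsto_atTop_atTop.2
    intro b
    exact ⟨2 * b, fun a ha => by omega⟩
  have hlim : Tendsto (fun n : ℕ => x (n / 2) - x₀) atTop (𝓝 0) := by
    have := (hx.comp hdiv).sub_const x₀
    simpa using this
  have hd0 : Tendsto (fun n => y (n + 1) - y n) atTop (𝓝 0) := by
    rw [tendsto_zero_iff_norm_tendsto_zero]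
    have habs : ∀ n, ‖y (n + 1) - y n‖ = ‖x (n / 2) - x₀‖ := by
      intro n
      rcases Nat.even_or_odd n with he | ho
      · obtain ⟨k, hk⟩ := he
        have hn : n = 2 * k := by omega
        subst hn
        rw [show 2 * k + 1 = 2 * k + 1 from rfl, y_odd, y_even]
        simp [Nat.mul_div_cancel_left]
      · obtain ⟨k, hk⟩ := ho
        subst hk
        have : 2 * k + 1 + 1 = 2 * (k + 1) := by ring
        rw [this, y_even, y_odd]
        have : (2 * k + 1) / 2 = k := by omega
        rw [this, norm_sub_rev]
    have := hlim.norm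
    simp only [norm_zero] at this ⊢
    exact this.congr (fun n => (habs n).symm)
  have D := h y hyE (null_slowlyOscillating hd0)
  rw [Metric.tendsto_atTop]
  intro ε hε
  obtain ⟨δ, hδ, N, hD⟩ := D ε hε
  refine ⟨N + ⌈1 / δ⌉₊ + 1, fun n hn => ?_⟩
  have hn1 : N ≤ 2 * n := by omega
  have hn2 : ((2 * n + 1 : ℕ) : ℝ) ≤ (1 + δ) * (2 * n : ℕ) := by
    have hnδ : (1 : ℝ) ≤ δ * n := by
      have h1 : (1 / δ : ℝ) ≤ ⌈1 / δ⌉₊ := Nat.le_ceil _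
      have h2 : ((⌈1 / δ⌉₊ : ℝ)) ≤ n := by
        exact_mod_cast le_trans (by omega : ⌈1 / δ⌉₊ ≤ n) le_rfl
      have := h1.trans h2
      rw [div_le_iff₀ hδ] at this
      linarith [mul_comm δ (n : ℝ)]
    push_cast
    nlinarith
  have := hD (2 * n) (2 * n + 1) hn1 (by omega) hn2
  have e1 : y (2 * n + 1) = x n := y_odd n
  have e2 : y (2 * n) = x₀ := y_even n
  have e3 : y (2 * n + 1 + 1) = x₀ := by
    have : 2 * n + 1 + 1 = 2 * (n + 1) := by ring
    rw [this, y_even]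
  simp only [e1, e2, e3] at this
  rw [Real.dist_eq]
  have habs : |f (x n) - f x₀| ≤ |f x₀ - f (x n) - (f (x n) - f x₀)| := by
    rw [show f x₀ - f (x n) - (f (x n) - f x₀) = -(2 * (f (x n) - f x₀)) by ring,
      abs_neg, abs_mul]
    simp only [abs_two]
    nlinarith [abs_nonneg (f (x n) - f x₀)]
  exact lt_of_le_of_lt habs this

theorem quasi_slowly_oscillating_continuous_implies_ideal_seq_continuous (F : Filter ℕ)
    (hF : F ≤ Filter.cofinite) [F.NeBot] (E : Set ℝ) (f : ℝ → ℝ)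
    (h : ∀ x : ℕ → ℝ, (∀ n, x n ∈ E) →
      SlowlyOscillating (fun n => x (n + 1) - x n) →
      SlowlyOscillating (fun n => f (x (n + 1)) - f (x n))) :
    ∀ x₀ ∈ E, ∀ x : ℕ → ℝ, (∀ n, x n ∈ E) → Tendsto x F (𝓝 x₀) →
      Tendsto (f ∘ x) F (𝓝 (f x₀)) := by
  intro x₀ hx₀ x hxE hx
  have hcont : Tendsto f (𝓝[E] x₀) (𝓝 (f x₀)) := by
    rw [tendsto_iff_seq_tendsto]
    classical
    intro u hu
    rw [tendsto_nhdsWithin_iff] at hu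
    obtain ⟨hu1, hu2⟩ := hu
    set u' : ℕ → ℝ := fun n => if u n ∈ E then u n else x₀ with hu'
    have hu'E : ∀ n, u' n ∈ E := by
      intro n; by_cases hn : u n ∈ E <;> simp [hu', hn, hx₀]
    have heq : u' =ᶠ[atTop] u := hu2.mono fun n hn => by simp [hu', hn]
    have hu'lim : Tendsto u' atTop (𝓝 x₀) := hu1.congr' heq.symm
    have := key_seq_cont E f h hx₀ hu'E hu'lim
    exact this.congr' (heq.mono fun n hn => by simp [Function.comp, hn])
  have hxE' : Tendsto x F (𝓝[E] x₀) :=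
    tendsto_nhdsWithin_iff.2 ⟨hx, Eventually.of_forall hxE⟩
  exact hcont.comp hxE'
end

section
/- Let F be a filter on ℕ with F ≤ Filter.cofinite and F.NeBot (representing a nontrivial admissible ideal I on ℕ). A subset E of ℝ is ward compact (every sequence of points of E has a quasi-Cauchy subsequence) if and only if E is I-ward compact (every sequence of points of E has an I-quasi-Cauchy subsequence). -/
open Filter Topology

theorem ward_compact_iff_ideal_ward_compact (F : Filter ℕ) (hF : F ≤ Filter.cofinite)
    [F.NeBot] (E : Set ℝ) :
    (∀ x : ℕ → ℝ, (∀ n, x n ∈ E) → ∃ φ : ℕ → ℕ, StrictMono φ ∧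
      Tendsto (fun n => x (φ (n + 1)) - x (φ n)) atTop (𝓝 0)) ↔
    (∀ x : ℕ → ℝ, (∀ n, x n ∈ E) → ∃ φ : ℕ → ℕ, StrictMono φ ∧
      Tendsto (fun n => x (φ (n + 1)) - x (φ n)) F (𝓝 0)) := by
  have hFle : F ≤ atTop := by rwa [← Nat.cofinite_eq_atTop]
  constructor
  · intro h x hx
    obtain ⟨φ, hφ, ht⟩ := h x hx
    exact ⟨φ, hφ, ht.mono_left hFle⟩
  · intro h x hx
    by_cases hb : ∃ M, ∀ n, |x n| ≤ M
    · -- bounded: Bolzano–Weierstrass gives convergent subsequence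
      obtain ⟨M, hM⟩ := hb
      have hbdd : Bornology.IsBounded (Set.range x) := by
        rw [Metric.isBounded_range_iff]
        refine ⟨2 * M, fun i j => ?_⟩
        calc dist (x i) (x j) ≤ |x i| + |x j| := by
              rw [Real.dist_eq]; exact (abs_sub _ _)
          _ ≤ M + M := add_le_add (hM i) (hM j)
          _ = 2 * M := by ring
      obtain ⟨a, -, φ, hφ, ha⟩ := tendsto_subseq_of_bounded hbdd (fun n => Set.mem_range_self n)
      refine ⟨φ, hφ, ?_⟩
      have h1 : Tendsto (fun n => x (φ (n + 1))) atTop (𝓝 a) :=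
        ha.comp (tendsto_add_atTop_nat 1)
      have := h1.sub ha
      simpa using this
    · -- unbounded: construct a sequence with gaps ≥ 1 and derive a contradiction
      exfalso
      push_neg at hb
      have hb' : ∀ M : ℝ, ∃ n, M < |x n| := fun M => hb M
      choose f hf using hb'
      let w : ℕ → ℕ := fun k => Nat.rec 0 (fun _ m => f (|x m| + 1)) k
      set y : ℕ → ℝ := fun k => x (w k) with hy
      have hstep : ∀ k, |y k| + 1 < |y (k + 1)| := fun k => hf (|x (w k)| + 1)
      have hgap : ∀ a b : ℕ, a < b → |y a| + 1 ≤ |y b| := by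
        intro a b hab
        induction b with
        | zero => omega
        | succ b ih =>
          rcases Nat.lt_succ_iff_lt_or_eq.mp hab with h' | h'
          · exact le_trans (ih h') (le_trans (by linarith [hstep b]) le_rfl)
          · subst h'; linarith [hstep a]
      obtain ⟨φ, hφ, ht⟩ := h y (fun k => hx (w k))
      have key : ∀ n, (1 : ℝ) ≤ |y (φ (n + 1)) - y (φ n)| := by
        intro n
        have h1 := hgap (φ n) (φ (n + 1)) (hφ (Nat.lt_succ_self n))
        have := abs_sub_abs_le_abs_sub (y (φ (n + 1))) (y (φ n))
        linarith
      have hev : ∀ᶠ n in F, |y (φ (n + 1)) - y (φ n)| < 1 := by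
        have := ht (Metric.ball_mem_nhds (0 : ℝ) one_pos)
        filter_upwards [this] with n hn
        simpa [Real.dist_eq] using hn
      obtain ⟨n, hn⟩ := hev.exists
      linarith [key n]
end

section
/- Let F be a filter on ℕ with F ≤ Filter.cofinite and F.NeBot (representing a nontrivial admissible ideal I on ℕ). A subset E of ℝ is bounded (Bornology.IsBounded E) if and only if E is I-ward compact (every sequence of points of E has an I-quasi-Cauchy subsequence). -/
open Filter Topology

theorem bounded_iff_ideal_ward_compact (F : Filter ℕ) (hF : F ≤ Filter.cofinite)
    [F.NeBot] (E : Set ℝ) :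
    Bornology.IsBounded E ↔
    (∀ x : ℕ → ℝ, (∀ n, x n ∈ E) → ∃ φ : ℕ → ℕ, StrictMono φ ∧
      Tendsto (fun n => x (φ (n + 1)) - x (φ n)) F (𝓝 0)) := by
  constructor
  · intro hE x hx
    obtain ⟨a, -, φ, hφ, hconv⟩ := tendsto_subseq_of_bounded hE hx
    refine ⟨φ, hφ, ?_⟩
    have h1 : Tendsto (fun n => x (φ (n + 1)) - x (φ n)) atTop (𝓝 (a - a)) := by
      exact Tendsto.sub (hconv.comp (tendsto_add_atTop_nat 1)) hconv
    rw [sub_self] at h1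
    exact h1.mono_left (hF.trans_eq Nat.cofinite_eq_atTop)
  · intro h
    by_contra hE
    rw [isBounded_iff_forall_norm_le] at hE
    push_neg at hE
    -- build a sequence with |x (n+1)| > |x n| + 1
    have hrec : ∀ r : ℝ, ∃ y ∈ E, r + 1 < ‖y‖ := by
      intro r
      obtain ⟨y, hy, hy2⟩ := hE (r + 1)
      exact ⟨y, hy, hy2⟩
    choose f hf1 hf2 using hrec
    obtain ⟨y0, hy0, -⟩ := hE 0
    set x : ℕ → ℝ := fun n => Nat.rec y0 (fun _ p => f ‖p‖) n with hxdef
    have hxE : ∀ n, x n ∈ E := by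
      intro n; cases n with
      | zero => exact hy0
      | succ k => exact hf1 _
    have hstep : ∀ n, ‖x n‖ + 1 < ‖x (n + 1)‖ := fun n => hf2 ‖x n‖
    have hmono : StrictMono (fun n => ‖x n‖) := by
      apply strictMono_nat_of_lt_succ
      intro n
      have := hstep n
      linarith
    obtain ⟨φ, hφ, htend⟩ := h x hxE
    have hsep : ∀ n, 1 ≤ |x (φ (n + 1)) - x (φ n)| := by
      intro n
      have h1 : φ n + 1 ≤ φ (n + 1) := hφ (Nat.lt_succ_self n)
      have h2 : ‖x (φ n + 1)‖ ≤ ‖x (φ (n + 1))‖ := hmono.monotone h1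
      have h3 := hstep (φ n)
      have h4 : ‖x (φ n)‖ + 1 < ‖x (φ (n + 1))‖ := by linarith
      calc 1 ≤ ‖x (φ (n + 1))‖ - ‖x (φ n)‖ := by linarith
        _ ≤ ‖x (φ (n + 1)) - x (φ n)‖ := by
            have := abs_sub_abs_le_abs_sub (x (φ (n + 1))) (x (φ n))
            simpa [Real.norm_eq_abs] using this
        _ = |x (φ (n + 1)) - x (φ n)| := Real.norm_eq_abs _
    have hmem : {n | |x (φ (n + 1)) - x (φ n)| < 1} ∈ F := by
      have := htend (Metric.ball_mem_nhds (0 : ℝ) one_pos)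
      simpa [Metric.ball, Real.dist_eq, Set.preimage] using this
    obtain ⟨n, hn⟩ := F.nonempty_of_mem hmem
    exact absurd (hsep n) (not_le.mpr hn)
end

section
/- Let F be a filter on ℕ with F ≤ Filter.cofinite and F.NeBot (representing a nontrivial admissible ideal I on ℕ), let E ⊆ ℝ and f : ℝ → ℝ. If f is I-ward continuous on E (for every sequence x : ℕ → ℝ of points of E, if Tendsto (fun n => x (n+1) − x n) F (𝓝 0) then Tendsto (fun n => f (x (n+1)) − f (x n)) F (𝓝 0)), then f is I-sequentially continuous on E: for every x₀ ∈ E and every sequence x of points of E with Tendsto x F (𝓝 x₀), one has Tendsto (f ∘ x) F (𝓝 (f x₀)). -/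
open Filter Topology

theorem ideal_ward_continuous_implies_ideal_seq_continuous (F : Filter ℕ)
    (hF : F ≤ Filter.cofinite) [F.NeBot] (E : Set ℝ) (f : ℝ → ℝ)
    (h : ∀ x : ℕ → ℝ, (∀ n, x n ∈ E) →
      Tendsto (fun n => x (n + 1) - x n) F (𝓝 0) →
      Tendsto (fun n => f (x (n + 1)) - f (x n)) F (𝓝 0)) :
    ∀ x₀ ∈ E, ∀ x : ℕ → ℝ, (∀ n, x n ∈ E) → Tendsto x F (𝓝 x₀) →
      Tendsto (f ∘ x) F (𝓝 (f x₀)) := by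
  intro x₀ hx₀ x hxE hx
  by_contra hcon
  rw [Metric.tendsto_nhds] at hcon
  push_neg at hcon
  obtain ⟨ε, hε, hU⟩ := hcon
  have hsel : ∀ k : ℕ, ∃ n, dist (x n) x₀ < 1/(k+1) ∧ ¬ dist (f (x n)) (f x₀) < ε := by
    intro k
    have hV : ∀ᶠ n in F, dist (x n) x₀ < 1/(k+1) :=
      Metric.tendsto_nhds.mp hx (1/(k+1)) (by positivity)
    by_contra hc
    push_neg at hc
    exact hU (hV.mono fun n hn => not_le.mpr (hc n hn))
  choose m hm1 hm2 using hsel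
  set z : ℕ → ℝ := fun n => if Even n then x (m (n / 2)) else x₀ with hz
  have hzE : ∀ n, z n ∈ E := by
    intro n
    simp only [hz]
    split
    · exact hxE _
    · exact hx₀
  have hbound : ∀ n : ℕ, |z (n + 1) - z n| ≤ 1 / ((n / 2 : ℕ) + 1 : ℝ) := by
    intro n
    rcases Nat.even_or_odd n with he | ho
    · have h1 : ¬ Even (n + 1) := by simp [Nat.even_add_one, he]
      have : z (n + 1) = x₀ := by simp [hz, h1]
      have h2 : z n = x (m (n / 2)) := by simp [hz, he]
      rw [this, h2, abs_sub_comm]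
      have := hm1 (n / 2)
      rw [Real.dist_eq] at this
      exact le_of_lt this
    · have h1 : Even (n + 1) := Odd.add_one ho
      have hzn : z n = x₀ := by
        simp only [hz]
        rw [if_neg (Nat.not_even_iff_odd.mpr ho)]
      have hzn1 : z (n + 1) = x (m ((n + 1) / 2)) := by simp [hz, h1]
      rw [hzn, hzn1]
      have := hm1 ((n + 1) / 2)
      rw [Real.dist_eq] at this
      have hle : (n / 2 : ℕ) ≤ ((n + 1) / 2 : ℕ) := by omega
      have hcast : (1 : ℝ) / (((n+1)/2 : ℕ) + 1) ≤ 1 / ((n/2 : ℕ) + 1) := by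
        apply one_div_le_one_div_of_le
        · positivity
        · exact_mod_cast Nat.add_le_add_right hle 1
      calc |x (m ((n+1)/2)) - x₀| ≤ 1 / (((n+1)/2 : ℕ) + 1) := le_of_lt this
        _ ≤ 1 / ((n/2 : ℕ) + 1) := hcast
  have haux : Tendsto (fun n : ℕ => (1 : ℝ) / ((n / 2 : ℕ) + 1)) atTop (𝓝 0) := by
    have h2 : Tendsto (fun n : ℕ => n / 2) atTop atTop :=
      tendsto_atTop_atTop.mpr fun b => ⟨2 * b, fun a ha => by omega⟩
    exact tendsto_one_div_add_atTop_nhds_zero_nat.comp h2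
  have hΔ : Tendsto (fun n => z (n + 1) - z n) atTop (𝓝 0) :=
    squeeze_zero_norm (fun n => hbound n) haux
  have hΔF : Tendsto (fun n => z (n + 1) - z n) F (𝓝 0) := by
    apply hΔ.mono_left
    rwa [← Nat.cofinite_eq_atTop]
  have hfΔ := h z hzE hΔF
  obtain ⟨n, hn⟩ := (Metric.tendsto_nhds.mp hfΔ ε hε).exists
  rw [Real.dist_0_eq_abs] at hn
  rcases Nat.even_or_odd n with he | ho
  · have h1 : ¬ Even (n + 1) := by simp [Nat.even_add_one, he]
    have hz1 : z (n + 1) = x₀ := by simp [hz, h1]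
    have hz2 : z n = x (m (n / 2)) := by simp [hz, he]
    rw [hz1, hz2, abs_sub_comm] at hn
    exact hm2 (n / 2) (by rwa [Real.dist_eq])
  · have h1 : Even (n + 1) := Odd.add_one ho
    have hzn : z n = x₀ := by
      simp only [hz]
      rw [if_neg (Nat.not_even_iff_odd.mpr ho)]
    have hzn1 : z (n + 1) = x (m ((n + 1) / 2)) := by simp [hz, h1]
    rw [hzn, hzn1] at hn
    exact hm2 ((n + 1) / 2) (by rwa [Real.dist_eq])
end

section
/- Let F be a filter on ℕ with F ≤ Filter.cofinite and F.NeBot (representing a nontrivial admissible ideal I on ℕ), let E ⊆ ℝ and f : ℝ → ℝ. If f is I-ward continuous on E (for every sequence x : ℕ → ℝ of points of E, if Tendsto (fun n => x (n+1) − x n) F (𝓝 0) then Tendsto (fun n => f (x (n+1)) − f (x n)) F (𝓝 0)), then f is continuous on E in the ordinary sense (ContinuousOn f E). -/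
open Filter Topology

theorem ideal_ward_continuous_implies_continuousOn (F : Filter ℕ)
    (hF : F ≤ Filter.cofinite) [F.NeBot] (E : Set ℝ) (f : ℝ → ℝ)
    (h : ∀ x : ℕ → ℝ, (∀ n, x n ∈ E) →
      Tendsto (fun n => x (n + 1) - x n) F (𝓝 0) →
      Tendsto (fun n => f (x (n + 1)) - f (x n)) F (𝓝 0)) :
    ContinuousOn f E := by
  intro a ha
  rw [ContinuousWithinAt, Metric.tendsto_nhdsWithin_nhds]
  by_contra hc
  push_neg at hc
  obtain ⟨ε, hε, hεc⟩ := hc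
  -- choose a sequence x n ∈ E with dist (x n) a < 1/(n+1), dist (f (x n)) (f a) ≥ ε
  have hx : ∀ n : ℕ, ∃ z, z ∈ E ∧ dist z a < 1 / (n + 1) ∧ ε ≤ dist (f z) (f a) := by
    intro n
    obtain ⟨z, hz1, hz2, hz3⟩ := hεc (1 / (n + 1)) (by positivity)
    exact ⟨z, hz1, hz2, hz3⟩
  choose x hxE hxd hxf using hx
  set y : ℕ → ℝ := fun n => if Even n then x (n / 2) else a with hy
  have hyE : ∀ n, y n ∈ E := by
    intro n
    simp only [hy]
    split
    · exact hxE _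
    · exact ha
  -- bound on consecutive differences
  have hbound : ∀ n : ℕ, |y (n + 1) - y n| ≤ 1 / ((n / 2 : ℕ) + 1 : ℝ) := by
    intro n
    rcases Nat.even_or_odd n with he | ho
    · obtain ⟨k, hk⟩ := he
      have hk' : n = 2 * k := by omega
      have h1 : y n = x k := by simp [hy, hk', Nat.mul_div_cancel_left, even_two_mul]
      have h2 : y (n + 1) = a := by
        have : ¬ Even (n + 1) := by simp [hk', parity_simps]
        simp [hy, this]
      have hd : dist (x k) a < 1 / (k + 1) := hxd k
      rw [Real.dist_eq] at hd
      have hdiv : n / 2 = k := by omega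
      rw [h1, h2, abs_sub_comm, hdiv]
      exact hd.le
    · obtain ⟨k, hk⟩ := ho
      have h1 : y n = a := by
        have : ¬ Even n := by simp [hk, parity_simps]
        simp [hy, this]
      have h2 : y (n + 1) = x (k + 1) := by
        have he : Even (n + 1) := by simp [hk, parity_simps]
        have : (n + 1) / 2 = k + 1 := by omega
        simp [hy, he, this]
      have hd := hxd (k + 1)
      rw [Real.dist_eq] at hd
      push_cast at hd
      have hdiv : n / 2 = k := by omega
      rw [h1, h2, hdiv]
      push_cast at hd ⊢
      calc |x (k + 1) - a| ≤ 1 / ((k : ℝ) + 1 + 1) := hd.le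
        _ ≤ 1 / ((k : ℝ) + 1) := by
            apply one_div_le_one_div_of_le <;> norm_num <;> positivity
  -- y is quasi-Cauchy along atTop, hence along F
  have hten : Tendsto (fun n => y (n + 1) - y n) atTop (𝓝 0) := by
    apply squeeze_zero_norm hbound
    have : Tendsto (fun n : ℕ => (n / 2 : ℕ)) atTop atTop := by
      apply Filter.tendsto_atTop_atTop.2
      intro b
      exact ⟨2 * b, fun n hn => by omega⟩
    have h2 : Tendsto (fun m : ℕ => 1 / ((m : ℝ) + 1)) atTop (𝓝 0) :=
      tendsto_one_div_add_atTop_nhds_zero_nat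
    exact h2.comp this
  have htenF : Tendsto (fun n => y (n + 1) - y n) F (𝓝 0) :=
    hten.mono_left (by rwa [← Nat.cofinite_eq_atTop])
  have hfF := h y hyE htenF
  -- but every difference of f-values has abs ≥ ε
  have hlow : ∀ n : ℕ, ε ≤ |f (y (n + 1)) - f (y n)| := by
    intro n
    rcases Nat.even_or_odd n with he | ho
    · obtain ⟨k, hk⟩ := he
      have hk' : n = 2 * k := by omega
      have h1 : y n = x k := by simp [hy, hk', Nat.mul_div_cancel_left, even_two_mul]
      have h2 : y (n + 1) = a := by
        have : ¬ Even (n + 1) := by simp [hk', parity_simps]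
        simp [hy, this]
      rw [h1, h2, abs_sub_comm, ← Real.dist_eq]
      exact hxf k
    · obtain ⟨k, hk⟩ := ho
      have h1 : y n = a := by
        have : ¬ Even n := by simp [hk, parity_simps]
        simp [hy, this]
      have h2 : y (n + 1) = x (k + 1) := by
        have he : Even (n + 1) := by simp [hk, parity_simps]
        have : (n + 1) / 2 = k + 1 := by omega
        simp [hy, he, this]
      rw [h1, h2, ← Real.dist_eq]
      exact hxf (k + 1)
  have := (Metric.tendsto_nhds.1 hfF ε hε)
  have hcontra : ∀ᶠ n in F, False := by
    filter_upwards [this] with n hn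
    rw [Real.dist_eq, sub_zero] at hn
    exact absurd (hlow n) (not_le.2 hn)
  exact Filter.NeBot.ne ‹F.NeBot› (Filter.eventually_false_iff_eq_bot.1 hcontra)
end

section
/- Let F be a filter on ℕ with F ≤ Filter.cofinite and F.NeBot (representing a nontrivial admissible ideal I on ℕ), let E ⊆ ℝ and f : ℝ → ℝ. If f is I-ward continuous on E and E is I-ward compact, then the image f '' E is I-ward compact. -/
open Filter Topology

theorem ideal_ward_continuous_image_of_ideal_ward_compact (F : Filter ℕ)
    (hF : F ≤ Filter.cofinite) [F.NeBot] (E : Set ℝ) (f : ℝ → ℝ)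
    (hf : ∀ x : ℕ → ℝ, (∀ n, x n ∈ E) →
      Tendsto (fun n => x (n + 1) - x n) F (𝓝 0) →
      Tendsto (fun n => f (x (n + 1)) - f (x n)) F (𝓝 0))
    (hE : ∀ x : ℕ → ℝ, (∀ n, x n ∈ E) → ∃ φ : ℕ → ℕ, StrictMono φ ∧
      Tendsto (fun n => x (φ (n + 1)) - x (φ n)) F (𝓝 0)) :
    ∀ y : ℕ → ℝ, (∀ n, y n ∈ f '' E) → ∃ φ : ℕ → ℕ, StrictMono φ ∧
      Tendsto (fun n => y (φ (n + 1)) - y (φ n)) F (𝓝 0) := by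
  intro y hy
  choose x hxE hxy using hy
  obtain ⟨φ, hφ, hqc⟩ := hE x hxE
  refine ⟨φ, hφ, ?_⟩
  have := hf (fun n => x (φ n)) (fun n => hxE (φ n)) hqc
  simpa [hxy] using this
end

section
/- Let F be a filter on ℕ with F ≤ Filter.cofinite and F.NeBot (representing a nontrivial admissible ideal I on ℕ), let E ⊆ ℝ and f : ℝ → ℝ. If f is I-ward continuous on E and E is compact (IsCompact E), then the image f '' E is compact. -/
open Filter Topology

theorem ideal_ward_continuous_image_of_compact (F : Filter ℕ)
    (hF : F ≤ Filter.cofinite) [F.NeBot] (E : Set ℝ) (f : ℝ → ℝ)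
    (hf : ∀ x : ℕ → ℝ, (∀ n, x n ∈ E) →
      Tendsto (fun n => x (n + 1) - x n) F (𝓝 0) →
      Tendsto (fun n => f (x (n + 1)) - f (x n)) F (𝓝 0))
    (hE : IsCompact E) :
    IsCompact (f '' E) := by
  rw [isCompact_iff_isSeqCompact]
  intro y hy
  -- choose preimages
  choose x hxE hxy using fun n => hy n
  -- extract a convergent subsequence of x
  obtain ⟨ξ, hξE, φ, hφ, hxφ⟩ := hE.isSeqCompact hxE
  -- interleave x ∘ φ with ξ
  set t : ℕ → ℝ := fun n => if n % 2 = 0 then x (φ (n / 2)) else ξ with ht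
  have htE : ∀ n, t n ∈ E := by
    intro n
    simp only [ht]
    split <;> [exact hxE _; exact hξE]
  have htc : Tendsto (fun n => t (n + 1) - t n) atTop (𝓝 0) := by
    rw [Metric.tendsto_atTop]
    intro ε hε
    rw [Metric.tendsto_atTop] at hxφ
    obtain ⟨N, hN⟩ := hxφ (ε / 2) (by linarith)
    have key : ∀ m, 2 * N ≤ m → |t m - ξ| < ε / 2 := by
      intro m hm
      simp only [ht]
      split
      · have := hN (m / 2) (by omega)
        simpa [Function.comp, Real.dist_eq] using this
      · simpa using by linarith
    refine ⟨2 * N, fun n hn => ?_⟩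
    have e1 := key (n + 1) (by omega)
    have e2 := key n hn
    rw [Real.dist_eq, sub_zero]
    calc |t (n + 1) - t n| = |(t (n + 1) - ξ) - (t n - ξ)| := by ring_nf
      _ ≤ |t (n + 1) - ξ| + |t n - ξ| := abs_sub _ _
      _ < ε := by linarith
  -- apply ward continuity along F
  have hFc : Tendsto (fun n => t (n + 1) - t n) F (𝓝 0) :=
    htc.mono_left (by rw [← Nat.cofinite_eq_atTop]; exact hF)
  have hft := hf t htE hFc
  -- f ξ is a cluster point of y ∘ φ
  have hclus : MapClusterPt (f ξ) atTop (fun j => y (φ j)) := by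
    rw [mapClusterPt_iff_frequently]
    intro s hs
    obtain ⟨ε, hε, hεs⟩ := Metric.mem_nhds_iff.mp hs
    rw [frequently_atTop]
    intro N
    have h1 : {n | dist (f (t (n + 1)) - f (t n)) 0 < ε} ∈ F :=
      hft (Metric.ball_mem_nhds 0 hε)
    have h2 : {n | 2 * N ≤ n} ∈ F := hF (by
      simp only [Filter.mem_cofinite]
      apply Set.Finite.subset (Set.finite_Iio (2 * N))
      intro k hk
      simp only [Set.mem_compl_iff, Set.mem_setOf_eq, not_le] at hk
      exact hk)
    obtain ⟨n, hn1, hn2⟩ := Filter.Eventually.exists (Filter.inter_mem h1 h2 : ∀ᶠ n in F, dist (f (t (n + 1)) - f (t n)) 0 < ε ∧ 2 * N ≤ n)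
    replace hn1 : dist (f (t (n + 1)) - f (t n)) 0 < ε := hn1
    replace hn2 : 2 * N ≤ n := hn2
    rcases Nat.even_or_odd n with he | ho
    · -- n even: t n = x (φ (n/2)), t (n+1) = ξ
      have hpar : n % 2 = 0 := Nat.even_iff.mp he
      refine ⟨n / 2, by omega, hεs ?_⟩
      have hte : t n = x (φ (n / 2)) := by
        simp only [ht]; rw [if_pos hpar]
      have hto : t (n + 1) = ξ := by
        simp only [ht]
        rw [if_neg (by omega : ¬ (n + 1) % 2 = 0)]
      rw [Real.dist_eq, sub_zero, hte, hto] at hn1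
      rw [Metric.mem_ball, Real.dist_eq, ← hxy (φ (n / 2))]
      rw [abs_sub_comm] at hn1
      exact hn1
    · -- n odd: t n = ξ, t (n+1) = x (φ ((n+1)/2))
      have hpar : n % 2 = 1 := Nat.odd_iff.mp ho
      refine ⟨(n + 1) / 2, by omega, hεs ?_⟩
      have hte : t (n + 1) = x (φ ((n + 1) / 2)) := by
        simp only [ht]
        rw [if_pos (by omega : (n + 1) % 2 = 0)]
      have hto : t n = ξ := by
        simp only [ht]
        rw [if_neg (by omega : ¬ n % 2 = 0)]
      rw [Real.dist_eq, sub_zero, hte, hto] at hn1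
      rw [Metric.mem_ball, Real.dist_eq, ← hxy (φ ((n + 1) / 2))]
      exact hn1
  obtain ⟨ψ, hψ, hyψ⟩ := TopologicalSpace.FirstCountableTopology.tendsto_subseq hclus
  exact ⟨f ξ, ⟨ξ, hξE, rfl⟩, φ ∘ ψ, hφ.comp hψ, hyψ⟩
end

section
/- Let F be a filter on ℕ with F ≤ Filter.cofinite and F.NeBot (representing a nontrivial admissible ideal I on ℕ), let E ⊆ ℝ and f : ℝ → ℝ. If f is I-ward continuous on E and E is bounded (Bornology.IsBounded E), then the image f '' E is bounded. -/
open Filter Topology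

theorem ideal_ward_continuous_image_of_bounded (F : Filter ℕ)
    (hF : F ≤ Filter.cofinite) [F.NeBot] (E : Set ℝ) (f : ℝ → ℝ)
    (hf : ∀ x : ℕ → ℝ, (∀ n, x n ∈ E) →
      Tendsto (fun n => x (n + 1) - x n) F (𝓝 0) →
      Tendsto (fun n => f (x (n + 1)) - f (x n)) F (𝓝 0))
    (hE : Bornology.IsBounded E) :
    Bornology.IsBounded (f '' E) := by
  by_contra hB
  -- from unboundedness, for every r there is z ∈ E with |f z| > r
  have h : ∀ r : ℝ, ∃ z, z ∈ E ∧ r < |f z| := by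
    intro r
    by_contra hc
    push_neg at hc
    apply hB
    rw [isBounded_iff_forall_norm_le]
    refine ⟨r, ?_⟩
    rintro y ⟨z, hz, rfl⟩
    simpa using hc z hz
  -- recursively build z with |f (z (k+1))| > |f (z k)| + 1
  let z : ℕ → ℝ := fun n => Nat.rec (h 0).choose
    (fun _ prev => (h (|f prev| + 1)).choose) n
  have hzE : ∀ n, z n ∈ E := by
    intro n
    cases n with
    | zero => exact (h 0).choose_spec.1
    | succ k => exact (h (|f (z k)| + 1)).choose_spec.1
  have hstep : ∀ k, |f (z k)| + 1 < |f (z (k + 1))| := fun k =>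
    (h (|f (z k)| + 1)).choose_spec.2
  have hmono : ∀ j m, j < m → |f (z j)| + 1 < |f (z m)| := by
    intro j m hjm
    induction m with
    | zero => omega
    | succ k ih =>
      rcases Nat.lt_succ_iff_lt_or_eq.mp hjm with h1 | h2
      · have := hstep k
        linarith [ih h1]
      · subst h2; exact hstep j
  -- extract a convergent subsequence
  obtain ⟨a, -, φ, hφ, hlim⟩ := tendsto_subseq_of_bounded hE hzE
  set w : ℕ → ℝ := z ∘ φ with hw
  have hwE : ∀ n, w n ∈ E := fun n => hzE (φ n)
  have hqc : Tendsto (fun n => w (n + 1) - w n) F (𝓝 0) := by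
    have h1 : Tendsto (fun n => w (n + 1) - w n) atTop (𝓝 0) := by
      have := ((hlim.comp (tendsto_add_atTop_nat 1)).sub hlim)
      simpa using this
    have : Tendsto (fun n => w (n + 1) - w n) Filter.cofinite (𝓝 0) := by
      rwa [Nat.cofinite_eq_atTop]
    exact this.mono_left hF
  have hfqc := hf w hwE hqc
  have hbig : ∀ n, (1 : ℝ) ≤ |f (w (n + 1)) - f (w n)| := by
    intro n
    have hlt := hmono (φ n) (φ (n + 1)) (hφ (Nat.lt_succ_self n))
    have := abs_sub_abs_le_abs_sub (f (w (n + 1))) (f (w n))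
    simp only [hw, Function.comp_apply] at *
    linarith
  have hev : ∀ᶠ n in F, |f (w (n + 1)) - f (w n)| < 1 := by
    have := hfqc (Metric.ball_mem_nhds (0 : ℝ) one_pos)
    rw [Filter.mem_map] at this
    filter_upwards [this] with n hn
    simpa [Real.dist_eq] using hn
  have : ∀ᶠ _n in F, False := by
    filter_upwards [hev] with n hn
    exact absurd hn (not_lt.mpr (hbig n))
  exact (this.exists).elim (fun n hn => hn)
end

section
/- Let F be a filter on ℕ with F ≤ Filter.cofinite and F.NeBot (representing a nontrivial admissible ideal I on ℕ), let E ⊆ ℝ, and let (f_k : ℝ → ℝ) be a sequence of functions each of which is I-ward continuous on E. If (f_k) converges uniformly on E to a function f : ℝ → ℝ, then f is I-ward continuous on E. -/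
open Filter Topology

theorem uniform_limit_ideal_ward_continuous (F : Filter ℕ)
    (hF : F ≤ Filter.cofinite) [F.NeBot] (E : Set ℝ) (fk : ℕ → ℝ → ℝ) (f : ℝ → ℝ)
    (hfk : ∀ k, ∀ x : ℕ → ℝ, (∀ n, x n ∈ E) →
      Tendsto (fun n => x (n + 1) - x n) F (𝓝 0) →
      Tendsto (fun n => fk k (x (n + 1)) - fk k (x n)) F (𝓝 0))
    (hconv : TendstoUniformlyOn fk f atTop E) :
    ∀ x : ℕ → ℝ, (∀ n, x n ∈ E) →
      Tendsto (fun n => x (n + 1) - x n) F (𝓝 0) →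
      Tendsto (fun n => f (x (n + 1)) - f (x n)) F (𝓝 0) := by
  intro x hxE hqc
  rw [NormedAddCommGroup.tendsto_nhds_zero]
  intro ε hε
  obtain ⟨N, hN⟩ := (Metric.tendstoUniformlyOn_iff.1 hconv (ε/3) (by linarith)).exists
  have h1 := (NormedAddCommGroup.tendsto_nhds_zero.1 (hfk N x hxE hqc)) (ε/3) (by linarith)
  filter_upwards [h1] with n hn
  have a1 := hN (x (n+1)) (hxE (n+1))
  have a2 := hN (x n) (hxE n)
  rw [Real.dist_eq] at a1 a2
  rw [Real.norm_eq_abs] at hn ⊢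
  have : f (x (n+1)) - f (x n) =
      (f (x (n+1)) - fk N (x (n+1))) + (fk N (x (n+1)) - fk N (x n)) + (fk N (x n) - f (x n)) := by
    ring
  rw [this]
  calc |_| ≤ |f (x (n+1)) - fk N (x (n+1))| + |fk N (x (n+1)) - fk N (x n)| + |fk N (x n) - f (x n)| := by
        exact (abs_add_three _ _ _)
    _ < ε/3 + ε/3 + ε/3 := by
        rw [abs_sub_comm (fk N (x n))]
        linarith [a1, a2, hn]
    _ = ε := by ring
end

section
/- Let F be a filter on ℕ with F ≤ Filter.cofinite and F.NeBot (representing a nontrivial admissible ideal I on ℕ) and let E ⊆ ℝ. The set of functions f : E → ℝ that are I-ward continuous on E is closed in the space of all functions E → ℝ equipped with the topology of uniform convergence (i.e., it is a closed subset of E →ᵤ ℝ). -/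
open Filter Topology UniformConvergence

theorem ideal_ward_continuous_isClosed (F : Filter ℕ)
    (hF : F ≤ Filter.cofinite) [F.NeBot] (E : Set ℝ) :
    IsClosed {f : E →ᵤ ℝ | ∀ x : ℕ → E,
      Tendsto (fun n => (x (n + 1) : ℝ) - (x n : ℝ)) F (𝓝 0) →
      Tendsto (fun n => UniformFun.toFun f (x (n + 1)) - UniformFun.toFun f (x n))
        F (𝓝 0)} := by
  apply isClosed_of_closure_subset
  intro f hf x hx
  rw [NormedAddCommGroup.tendsto_nhds_zero]
  intro ε hε
  have hV : {p : ℝ × ℝ | dist p.1 p.2 < ε / 3} ∈ uniformity ℝ :=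
    Metric.dist_mem_uniformity (by linarith)
  rw [mem_closure_iff_nhds_basis (UniformFun.hasBasis_nhds E ℝ f)] at hf
  obtain ⟨g, hgS, hg⟩ := hf _ hV
  have h2 := (NormedAddCommGroup.tendsto_nhds_zero.mp (hgS x hx)) (ε / 3) (by linarith)
  filter_upwards [h2] with n hn
  have ha := hg (x (n + 1))
  have hb := hg (x n)
  simp only [Set.mem_setOf_eq, Real.dist_eq] at ha hb
  rw [Real.norm_eq_abs] at hn ⊢
  have key : UniformFun.toFun f (x (n + 1)) - UniformFun.toFun f (x n) =
      (UniformFun.toFun f (x (n + 1)) - UniformFun.toFun g (x (n + 1))) +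
      (UniformFun.toFun g (x (n + 1)) - UniformFun.toFun g (x n)) +
      (UniformFun.toFun g (x n) - UniformFun.toFun f (x n)) := by ring
  rw [key]
  calc |_| ≤ |UniformFun.toFun f (x (n + 1)) - UniformFun.toFun g (x (n + 1))| +
      |UniformFun.toFun g (x (n + 1)) - UniformFun.toFun g (x n)| +
      |UniformFun.toFun g (x n) - UniformFun.toFun f (x n)| := abs_add_three _ _ _
    _ < ε := by rw [abs_sub_comm] at hb; linarith
end
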